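/- Fix δ > 0 and a positive integer n. Let A_1, …, A_n, B, C be independent {+1, −1}-valued random variables with E[A_t] = e^{−δ} for each t ∈ [n], E[B] = e^{−2δ}, and E[C] = 0. Define X_i = C·∏_{t=1}^{i} A_t and Y_i = B·C·∏_{t=1}^{i} A_t for each i ∈ [n]. Then for all i, j ∈ [n]: E[X_i] = E[Y_i] = 0, E[X_i X_j] = E[Y_i Y_j] = e^{−δ|i−j|}, and E[X_i Y_j] = e^{−δ|i−j| − 2δ}. -/

import Mathlib

open MeasureTheory ProbabilityTheory

lemma pm_integrable {Ω : Type*} [MeasurableSpace Ω] {μ : Measure Ω}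
    [IsProbabilityMeasure μ] {f : Ω → ℝ}
    (hval : ∀ ω, f ω = 1 ∨ f ω = -1) (hmeas : Measurable f) : Integrable f μ := by
  refine (integrable_const (1:ℝ)).mono' hmeas.aestronglyMeasurable ?_
  filter_upwards with ω
  rcases hval ω with h | h <;> simp [h]

lemma pm_prod {ι Ω : Type*} {f : ι → Ω → ℝ} (hval : ∀ i ω, f i ω = 1 ∨ f i ω = -1)
    (s : Finset ι) (ω : Ω) : (∏ i ∈ s, f i ω) = 1 ∨ (∏ i ∈ s, f i ω) = -1 := by
  classical
  induction s using Finset.induction_on with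
  | empty => simp
  | insert _ _ hb ih =>
    rename_i b t
    rw [Finset.prod_insert hb]
    rcases hval b ω with h | h <;> rcases ih with h' | h' <;> simp [h, h']

lemma indep_integral_prod {Ω ι : Type*} [MeasurableSpace Ω] {μ : Measure Ω}
    [IsProbabilityMeasure μ] {f : ι → Ω → ℝ}
    (hval : ∀ i ω, f i ω = 1 ∨ f i ω = -1) (hmeas : ∀ i, Measurable (f i))
    (hindep : iIndepFun (m := fun _ => Real.measurableSpace) f μ) (s : Finset ι) :
    ∫ ω, ∏ i ∈ s, f i ω ∂μ = ∏ i ∈ s, ∫ ω, f i ω ∂μ := by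
  classical
  induction s using Finset.induction_on with
  | empty => simp
  | insert _ _ ha ih =>
    rename_i a s
    have hIndep : IndepFun (∏ j ∈ s, f j) (f a) μ :=
      hindep.indepFun_finsetProd_of_notMem hmeas ha
    have h1 : Integrable (f a) μ := pm_integrable (hval a) (hmeas a)
    have h2 : Integrable (∏ j ∈ s, f j) μ := by
      have he : (∏ j ∈ s, f j) = fun a => ∏ j ∈ s, f j a :=
        funext fun a => Finset.prod_apply a s f
      have hm : Measurable (∏ j ∈ s, f j) := by
        rw [he]; exact Finset.measurable_prod s fun i _ => hmeas i
      refine pm_integrable ?_ hm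
      intro ω; simpa [Finset.prod_apply] using pm_prod hval s ω
    have key := IndepFun.integral_mul_eq_mul_integral (IndepFun.symm hIndep) h1.aestronglyMeasurable h2.aestronglyMeasurable
    simp only [Finset.prod_insert ha]
    rw [← ih]
    calc ∫ ω, f a ω * ∏ i ∈ s, f i ω ∂μ
        = ∫ ω, (f a * ∏ j ∈ s, f j) ω ∂μ := by simp [Finset.prod_apply]
      _ = (∫ ω, f a ω ∂μ) * ∫ ω, (∏ j ∈ s, f j) ω ∂μ := key
      _ = (∫ ω, f a ω ∂μ) * ∫ ω, ∏ i ∈ s, f i ω ∂μ := by simp [Finset.prod_apply]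

/-- **Moments of the counterexample distribution `P`.** Let `A_1, …, A_n, B, C` be independent
`{+1,−1}`-valued random variables with `E[A_t] = e^{−δ}`, `E[B] = e^{−2δ}`, `E[C] = 0`, and set
`X_i = C·∏_{t≤i} A_t`, `Y_i = B·C·∏_{t≤i} A_t`. Then `E[X_i] = E[Y_i] = 0`,
`E[X_i X_j] = E[Y_i Y_j] = e^{−δ|i−j|}`, and `E[X_i Y_j] = e^{−δ|i−j|−2δ}`. -/
theorem counterexample_P_moments
    {Ω : Type*} [MeasurableSpace Ω] (μ : Measure Ω) [IsProbabilityMeasure μ]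
    (δ : ℝ) (hδ : 0 < δ) (n : ℕ) (hn : 0 < n)
    (A : Fin n → Ω → ℝ) (B C : Ω → ℝ)
    (hval : ∀ (i : Fin n ⊕ Bool) (ω : Ω),
      Sum.elim A (fun b => if b then C else B) i ω = 1 ∨
      Sum.elim A (fun b => if b then C else B) i ω = -1)
    (hmeas : ∀ i : Fin n ⊕ Bool, Measurable (Sum.elim A (fun b => if b then C else B) i))
    (hindep : iIndepFun (m := fun _ : Fin n ⊕ Bool => Real.measurableSpace)
      (Sum.elim A (fun b => if b then C else B)) μ)
    (hA : ∀ t : Fin n, ∫ ω, A t ω ∂μ = Real.exp (-δ))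
    (hB : ∫ ω, B ω ∂μ = Real.exp (-2 * δ))
    (hC : ∫ ω, C ω ∂μ = 0)
    (X Y : Fin n → Ω → ℝ)
    (hX : ∀ (i : Fin n) (ω : Ω), X i ω = C ω * ∏ t ∈ Finset.Iic i, A t ω)
    (hY : ∀ (i : Fin n) (ω : Ω), Y i ω = B ω * C ω * ∏ t ∈ Finset.Iic i, A t ω) :
    (∀ i : Fin n, ∫ ω, X i ω ∂μ = 0) ∧
    (∀ i : Fin n, ∫ ω, Y i ω ∂μ = 0) ∧
    (∀ i j : Fin n, ∫ ω, X i ω * X j ω ∂μ = Real.exp (-δ * |((i : ℕ) : ℝ) - ((j : ℕ) : ℝ)|)) ∧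
    (∀ i j : Fin n, ∫ ω, Y i ω * Y j ω ∂μ = Real.exp (-δ * |((i : ℕ) : ℝ) - ((j : ℕ) : ℝ)|)) ∧
    (∀ i j : Fin n, ∫ ω, X i ω * Y j ω ∂μ =
      Real.exp (-δ * |((i : ℕ) : ℝ) - ((j : ℕ) : ℝ)| - 2 * δ)) := by
  classical
  set g : Fin n ⊕ Bool → Ω → ℝ := Sum.elim A (fun b => if b then C else B) with hg
  have hgA : ∀ t : Fin n, g (Sum.inl t) = A t := fun t => rfl
  have hgC : g (Sum.inr true) = C := rfl
  have hgB : g (Sum.inr false) = B := rfl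
  have key : ∀ S : Finset (Fin n ⊕ Bool),
      ∫ ω, ∏ s ∈ S, g s ω ∂μ = ∏ s ∈ S, ∫ ω, g s ω ∂μ :=
    indep_integral_prod hval hmeas hindep
  have hvalA : ∀ (t : Fin n) (ω : Ω), A t ω = 1 ∨ A t ω = -1 := fun t ω => hval (Sum.inl t) ω
  have hvalB : ∀ ω, B ω = 1 ∨ B ω = -1 := fun ω => hval (Sum.inr false) ω
  have hvalC : ∀ ω, C ω = 1 ∨ C ω = -1 := fun ω => hval (Sum.inr true) ω
  have hsq : ∀ {x : ℝ}, x = 1 ∨ x = -1 → x * x = 1 := by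
    rintro x (rfl | rfl) <;> norm_num
  have hinj : ∀ (D : Finset (Fin n)), ∀ (x : Fin n), x ∈ D → ∀ y ∈ D,
      (Sum.inl x : Fin n ⊕ Bool) = Sum.inl y → x = y :=
    fun _ x _ y _ h => Sum.inl_injective h
  -- product over difference set
  have hprodsplit : ∀ (i j : Fin n), i ≤ j → ∀ ω,
      (∏ t ∈ Finset.Iic i, A t ω) * (∏ t ∈ Finset.Iic j, A t ω)
        = ∏ t ∈ Finset.Iic j \ Finset.Iic i, A t ω := by
    intro i j hij ω
    have hsub : Finset.Iic i ⊆ Finset.Iic j := Finset.Iic_subset_Iic.mpr hij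
    have h1 : (∏ t ∈ Finset.Iic i, A t ω) * (∏ t ∈ Finset.Iic i, A t ω) = 1 := by
      rw [← Finset.prod_mul_distrib]
      exact Finset.prod_eq_one fun t _ => hsq (hvalA t ω)
    calc (∏ t ∈ Finset.Iic i, A t ω) * (∏ t ∈ Finset.Iic j, A t ω)
        = (∏ t ∈ Finset.Iic i, A t ω) *
            ((∏ t ∈ Finset.Iic j \ Finset.Iic i, A t ω) * ∏ t ∈ Finset.Iic i, A t ω) := by
          rw [Finset.prod_sdiff hsub]
      _ = (∏ t ∈ Finset.Iic j \ Finset.Iic i, A t ω) *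
            ((∏ t ∈ Finset.Iic i, A t ω) * (∏ t ∈ Finset.Iic i, A t ω)) := by ring
      _ = ∏ t ∈ Finset.Iic j \ Finset.Iic i, A t ω := by rw [h1, mul_one]
  -- integral over difference set
  have hDint : ∀ (i j : Fin n), i ≤ j →
      ∫ ω, ∏ t ∈ Finset.Iic j \ Finset.Iic i, A t ω ∂μ
        = Real.exp (-δ * |((i : ℕ) : ℝ) - ((j : ℕ) : ℝ)|) := by
    intro i j hij
    have hij' : (i : ℕ) ≤ (j : ℕ) := hij
    have hsub : Finset.Iic i ⊆ Finset.Iic j := Finset.Iic_subset_Iic.mpr hij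
    have hcard : (Finset.Iic j \ Finset.Iic i).card = (j : ℕ) - (i : ℕ) := by
      rw [Finset.card_sdiff_of_subset hsub, Fin.card_Iic, Fin.card_Iic]
      omega
    have habs : |((i : ℕ) : ℝ) - ((j : ℕ) : ℝ)| = (((j : ℕ) - (i : ℕ) : ℕ) : ℝ) := by
      rw [abs_sub_comm, Nat.cast_sub hij']
      exact abs_of_nonneg (sub_nonneg.mpr (Nat.cast_le.mpr hij'))
    have himg : ∀ ω, ∏ t ∈ Finset.Iic j \ Finset.Iic i, A t ω
        = ∏ s ∈ (Finset.Iic j \ Finset.Iic i).image Sum.inl, g s ω := by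
      intro ω
      rw [Finset.prod_image (hinj _)]
      rfl
    simp only [himg]
    rw [key, Finset.prod_image (hinj _)]
    have : ∀ t ∈ Finset.Iic j \ Finset.Iic i,
        ∫ ω, g (Sum.inl t) ω ∂μ = Real.exp (-δ) := fun t _ => hA t
    rw [Finset.prod_congr rfl this, Finset.prod_const, hcard, ← Real.exp_nat_mul, habs]
    ring_nf
  -- E[X_i] = 0
  have hEX : ∀ i : Fin n, ∫ ω, X i ω ∂μ = 0 := by
    intro i
    have hnm : Sum.inr true ∉ (Finset.Iic i).image Sum.inl := by simp
    have hXi : ∀ ω, X i ω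
        = ∏ s ∈ insert (Sum.inr true) ((Finset.Iic i).image Sum.inl), g s ω := by
      intro ω
      rw [hX, Finset.prod_insert hnm, Finset.prod_image (hinj _)]
      rfl
    simp only [hXi]
    rw [key, Finset.prod_insert hnm]
    have : ∫ ω, g (Sum.inr true) ω ∂μ = 0 := hC
    rw [this, zero_mul]
  -- E[Y_i] = 0
  have hEY : ∀ i : Fin n, ∫ ω, Y i ω ∂μ = 0 := by
    intro i
    have hnm1 : Sum.inr true ∉ (Finset.Iic i).image Sum.inl := by simp
    have hnm2 : Sum.inr false ∉ insert (Sum.inr true) ((Finset.Iic i).image Sum.inl) := by simp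
    have hYi : ∀ ω, Y i ω = ∏ s ∈
        insert (Sum.inr false) (insert (Sum.inr true) ((Finset.Iic i).image Sum.inl)), g s ω := by
      intro ω
      rw [hY, Finset.prod_insert hnm2, Finset.prod_insert hnm1, Finset.prod_image (hinj _),
        ← mul_assoc]
      rfl
    simp only [hYi]
    rw [key, Finset.prod_insert hnm2, Finset.prod_insert hnm1]
    have : ∫ ω, g (Sum.inr true) ω ∂μ = 0 := hC
    rw [this, zero_mul, mul_zero]
  -- E[X_i X_j] for i ≤ j
  have hXXle : ∀ (i j : Fin n), i ≤ j → ∫ ω, X i ω * X j ω ∂μ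
      = Real.exp (-δ * |((i : ℕ) : ℝ) - ((j : ℕ) : ℝ)|) := by
    intro i j hij
    have hpt : ∀ ω, X i ω * X j ω = ∏ t ∈ Finset.Iic j \ Finset.Iic i, A t ω := by
      intro ω
      rw [hX, hX, ← hprodsplit i j hij ω]
      have h1 := hsq (hvalC ω)
      calc C ω * (∏ t ∈ Finset.Iic i, A t ω) * (C ω * ∏ t ∈ Finset.Iic j, A t ω)
          = (C ω * C ω) * ((∏ t ∈ Finset.Iic i, A t ω) * ∏ t ∈ Finset.Iic j, A t ω) := by
            ring
        _ = (∏ t ∈ Finset.Iic i, A t ω) * ∏ t ∈ Finset.Iic j, A t ω := by rw [h1, one_mul]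
    simp only [hpt]
    exact hDint i j hij
  -- E[X_i Y_j] for i ≤ j
  have hXYle : ∀ (i j : Fin n), i ≤ j → ∫ ω, X i ω * Y j ω ∂μ
      = Real.exp (-δ * |((i : ℕ) : ℝ) - ((j : ℕ) : ℝ)| - 2 * δ) := by
    intro i j hij
    have hnm : Sum.inr false ∉ (Finset.Iic j \ Finset.Iic i).image Sum.inl := by simp
    have hpt : ∀ ω, X i ω * Y j ω
        = ∏ s ∈ insert (Sum.inr false) ((Finset.Iic j \ Finset.Iic i).image Sum.inl), g s ω := by
      intro ω
      rw [Finset.prod_insert hnm, Finset.prod_image (hinj _)]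
      show X i ω * Y j ω = B ω * ∏ t ∈ Finset.Iic j \ Finset.Iic i, A t ω
      rw [hX, hY, ← hprodsplit i j hij ω]
      have := hsq (hvalC ω)
      calc C ω * (∏ t ∈ Finset.Iic i, A t ω) *
            (B ω * C ω * ∏ t ∈ Finset.Iic j, A t ω)
          = B ω * ((C ω * C ω) *
              ((∏ t ∈ Finset.Iic i, A t ω) * ∏ t ∈ Finset.Iic j, A t ω)) := by ring
        _ = B ω * ((∏ t ∈ Finset.Iic i, A t ω) * ∏ t ∈ Finset.Iic j, A t ω) := by
            rw [this, one_mul]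
    simp only [hpt]
    rw [key, Finset.prod_insert hnm, Finset.prod_image (hinj _)]
    have h1 : ∫ ω, g (Sum.inr false) ω ∂μ = Real.exp (-2 * δ) := hB
    have h2 : ∀ t ∈ Finset.Iic j \ Finset.Iic i,
        ∫ ω, g (Sum.inl t) ω ∂μ = Real.exp (-δ) := fun t _ => hA t
    rw [h1, Finset.prod_congr rfl h2]
    have h3 := hDint i j hij
    have h4 : ∫ ω, ∏ t ∈ Finset.Iic j \ Finset.Iic i, A t ω ∂μ
        = ∏ _t ∈ Finset.Iic j \ Finset.Iic i, Real.exp (-δ) := by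
      have himg : ∀ ω, ∏ t ∈ Finset.Iic j \ Finset.Iic i, A t ω
          = ∏ s ∈ (Finset.Iic j \ Finset.Iic i).image Sum.inl, g s ω := by
        intro ω; rw [Finset.prod_image (hinj _)]; rfl
      simp only [himg]
      rw [key, Finset.prod_image (hinj _)]
      exact Finset.prod_congr rfl h2
    rw [← h4, h3, ← Real.exp_add]
    congr 1
    ring
  refine ⟨hEX, hEY, ?_, ?_, ?_⟩
  · intro i j
    rcases le_total i j with hij | hji
    · exact hXXle i j hij
    · have : ∀ ω, X i ω * X j ω = X j ω * X i ω := fun ω => mul_comm _ _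
      simp only [this]
      rw [hXXle j i hji, abs_sub_comm]
  · intro i j
    have hpt : ∀ ω, Y i ω * Y j ω = X i ω * X j ω := by
      intro ω
      rw [hX, hX, hY, hY]
      have := hsq (hvalB ω)
      calc B ω * C ω * (∏ t ∈ Finset.Iic i, A t ω) *
            (B ω * C ω * ∏ t ∈ Finset.Iic j, A t ω)
          = (B ω * B ω) * (C ω * (∏ t ∈ Finset.Iic i, A t ω) *
              (C ω * ∏ t ∈ Finset.Iic j, A t ω)) := by ring
        _ = C ω * (∏ t ∈ Finset.Iic i, A t ω) *
              (C ω * ∏ t ∈ Finset.Iic j, A t ω) := by rw [this, one_mul]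
    simp only [hpt]
    rcases le_total i j with hij | hji
    · exact hXXle i j hij
    · have : ∀ ω, X i ω * X j ω = X j ω * X i ω := fun ω => mul_comm _ _
      simp only [this]
      rw [hXXle j i hji, abs_sub_comm]
  · intro i j
    rcases le_total i j with hij | hji
    · exact hXYle i j hij
    · have hswap : ∀ ω, X i ω * Y j ω = X j ω * Y i ω := by
        intro ω; rw [hX, hX, hY, hY]; ring
      simp only [hswap]
      rw [hXYle j i hji, abs_sub_comm]
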